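/- For ε ∈ (0,1/2) and δ_k := ε^k/(ε^k+(1-ε)^k), the sequence (1/h(δ_k))·(δ_k + (1+δ_k)·h(δ_k/(1+δ_k))) converges to 1 as k → ∞, where h is the binary entropy function. -/

import Mathlib

open Filter Real Topology

/-- The binary entropy function (base-2 logarithm), with `h 0 = h 1 = 0`. -/
noncomputable def binEnt (x : ℝ) : ℝ := -(x * Real.logb 2 x) - (1 - x) * Real.logb 2 (1 - x)

-- slope limits
lemma slope_log_one_add : Tendsto (fun δ : ℝ => Real.log (1 + δ) / δ) (𝓝[>] 0) (𝓝 1) := by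
  have h : HasDerivAt (fun x : ℝ => Real.log (1 + x)) 1 0 := by
    have := (Real.hasDerivAt_log (by norm_num : (1:ℝ) + 0 ≠ 0)).comp 0
      ((hasDerivAt_id 0).const_add 1)
    simpa [Function.comp_def] using this
  have := hasDerivAt_iff_tendsto_slope.mp h
  have h2 := this.mono_left (nhdsWithin_mono _ (by intro x hx; exact ne_of_gt hx))
  refine h2.congr (fun x => ?_)
  simp [slope_def_field, div_eq_inv_mul]

lemma slope_log_one_sub : Tendsto (fun δ : ℝ => Real.log (1 - δ) / δ) (𝓝[>] 0) (𝓝 (-1)) := by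
  have h : HasDerivAt (fun x : ℝ => Real.log (1 - x)) (-1) 0 := by
    have := (Real.hasDerivAt_log (by norm_num : (1:ℝ) - 0 ≠ 0)).comp 0
      ((hasDerivAt_id 0).const_sub 1)
    simpa [Function.comp_def] using this
  have := hasDerivAt_iff_tendsto_slope.mp h
  have h2 := this.mono_left (nhdsWithin_mono _ (by intro x hx; exact ne_of_gt hx))
  refine h2.congr (fun x => ?_)
  simp [slope_def_field, div_eq_inv_mul]

lemma neg_logb_atTop : Tendsto (fun δ : ℝ => -Real.logb 2 δ) (𝓝[>] 0) atTop := by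
  have h := Real.tendsto_log_nhdsGT_zero
  have : Tendsto (fun δ : ℝ => Real.logb 2 δ) (𝓝[>] 0) atBot := by
    simpa [Real.logb] using h.atBot_div_const (by positivity : (0:ℝ) < Real.log 2)
  exact tendsto_neg_atBot_atTop.comp this

/-- numerator helper -/
noncomputable def uu (δ : ℝ) : ℝ := (δ + (1 + δ) * Real.logb 2 (1 + δ)) / (-(δ * Real.logb 2 δ))
noncomputable def vv (δ : ℝ) : ℝ := ((1 - δ) * Real.logb 2 (1 - δ)) / (δ * Real.logb 2 δ)

lemma logb_ratio_add : Tendsto (fun δ : ℝ => Real.logb 2 (1 + δ) / δ) (𝓝[>] 0)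
    (𝓝 (1 / Real.log 2)) := by
  have := slope_log_one_add.div_const (Real.log 2)
  refine this.congr (fun x => ?_)
  rw [Real.logb, div_right_comm]

lemma logb_ratio_sub : Tendsto (fun δ : ℝ => -Real.logb 2 (1 - δ) / δ) (𝓝[>] 0)
    (𝓝 (1 / Real.log 2)) := by
  have h := (slope_log_one_sub.div_const (Real.log 2)).neg
  have h2 : Tendsto (fun δ : ℝ => -(Real.log (1 - δ) / δ / Real.log 2)) (𝓝[>] 0)
      (𝓝 (1 / Real.log 2)) := by simpa [neg_div] using h
  exact h2.congr fun x => by rw [Real.logb]; ring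

lemma uu_tendsto : Tendsto uu (𝓝[>] 0) (𝓝 0) := by
  have hnum : Tendsto (fun δ : ℝ => 1 + (1 + δ) * (Real.logb 2 (1 + δ) / δ)) (𝓝[>] 0)
      (𝓝 (1 + 1 * (1 / Real.log 2))) := by
    have h1 : Tendsto (fun δ : ℝ => (1:ℝ) + δ) (𝓝[>] 0) (𝓝 1) := by
      have : Tendsto (fun δ : ℝ => (1:ℝ) + δ) (𝓝 0) (𝓝 (1 + 0)) :=
        (continuous_const.add continuous_id).tendsto 0
      simpa using this.mono_left nhdsWithin_le_nhds
    exact tendsto_const_nhds.add (h1.mul logb_ratio_add)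
  have h := hnum.div_atTop neg_logb_atTop
  refine h.congr' ?_
  filter_upwards [self_mem_nhdsWithin] with δ (hδ : 0 < δ)
  have hδ' : δ ≠ 0 := ne_of_gt hδ
  unfold uu
  field_simp

lemma vv_tendsto : Tendsto vv (𝓝[>] 0) (𝓝 0) := by
  have hnum : Tendsto (fun δ : ℝ => (1 - δ) * (-Real.logb 2 (1 - δ) / δ)) (𝓝[>] 0)
      (𝓝 (1 * (1 / Real.log 2))) := by
    have h1 : Tendsto (fun δ : ℝ => (1:ℝ) - δ) (𝓝[>] 0) (𝓝 1) := by
      have : Tendsto (fun δ : ℝ => (1:ℝ) - δ) (𝓝 0) (𝓝 (1 - 0)) :=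
        (continuous_const.sub continuous_id).tendsto 0
      simpa using this.mono_left nhdsWithin_le_nhds
    exact h1.mul logb_ratio_sub
  have h := hnum.div_atTop neg_logb_atTop
  refine h.congr' ?_
  filter_upwards [self_mem_nhdsWithin] with δ (hδ : 0 < δ)
  have hδ' : δ ≠ 0 := ne_of_gt hδ
  unfold vv
  field_simp

lemma key_eq {δ : ℝ} (h0 : 0 < δ) (h1 : δ < 1) :
    (1 / binEnt δ) * (δ + (1 + δ) * binEnt (δ / (1 + δ)))
      = (1 + uu δ) / (1 + vv δ) := by
  have hδ : δ ≠ 0 := ne_of_gt h0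
  have h1δ : (0:ℝ) < 1 + δ := by linarith
  have h1δ' : (1:ℝ) + δ ≠ 0 := ne_of_gt h1δ
  have hb : Real.logb 2 δ < 0 := Real.logb_neg one_lt_two h0 h1
  have hc : Real.logb 2 (1 - δ) < 0 := Real.logb_neg one_lt_two (by linarith) (by linarith)
  have hbne : Real.logb 2 δ ≠ 0 := ne_of_lt hb
  have hsub : (1 : ℝ) - δ / (1 + δ) = 1 / (1 + δ) := by field_simp; ring
  have hlog1 : Real.logb 2 (δ / (1 + δ)) = Real.logb 2 δ - Real.logb 2 (1 + δ) :=
    Real.logb_div hδ h1δ'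
  have hlog2 : Real.logb 2 ((1:ℝ) / (1 + δ)) = -Real.logb 2 (1 + δ) := by
    rw [Real.logb_div one_ne_zero h1δ', Real.logb_one, zero_sub]
  have hE : binEnt (δ / (1 + δ))
      = (-(δ * Real.logb 2 δ) + δ * Real.logb 2 (1 + δ) + Real.logb 2 (1 + δ)) / (1 + δ) := by
    unfold binEnt
    rw [hsub, hlog1, hlog2]
    field_simp
    ring
  have hbinEnt : binEnt δ = -(δ * Real.logb 2 δ) - (1 - δ) * Real.logb 2 (1 - δ) := rfl
  have hEpos : 0 < binEnt δ := by
    rw [hbinEnt]; nlinarith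
  have hEne : binEnt δ ≠ 0 := ne_of_gt hEpos
  have hBne : -(δ * Real.logb 2 δ) ≠ 0 := by
    simp only [ne_eq, neg_eq_zero, mul_eq_zero, not_or]
    exact ⟨hδ, hbne⟩
  have hu : δ + (1 + δ) * binEnt (δ / (1 + δ)) = (-(δ * Real.logb 2 δ)) * (1 + uu δ) := by
    rw [hE]; unfold uu; field_simp; ring
  have hv : binEnt δ = (-(δ * Real.logb 2 δ)) * (1 + vv δ) := by
    rw [hbinEnt]; unfold vv; field_simp; ring
  rw [one_div, ← div_eq_inv_mul, hu, hv, mul_div_mul_left _ _ hBne]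

lemma ratio_limit : Tendsto (fun δ : ℝ =>
    (1 / binEnt δ) * (δ + (1 + δ) * binEnt (δ / (1 + δ)))) (𝓝[>] 0) (𝓝 1) := by
  have h : Tendsto (fun δ => (1 + uu δ) / (1 + vv δ)) (𝓝[>] 0) (𝓝 ((1 + 0) / (1 + 0))) :=
    Tendsto.div (tendsto_const_nhds.add uu_tendsto) (tendsto_const_nhds.add vv_tendsto)
      (by norm_num)
  have h' : Tendsto (fun δ => (1 + uu δ) / (1 + vv δ)) (𝓝[>] 0) (𝓝 1) := by simpa using h
  refine h'.congr' ?_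
  filter_upwards [Ioo_mem_nhdsGT (one_pos : (0:ℝ) < 1)] with δ hδ
  exact (key_eq hδ.1 hδ.2).symm

theorem entropy_ratio_tendsto_one (ε : ℝ) (hε0 : 0 < ε) (hε : ε < 1/2) :
    Filter.Tendsto (fun k : ℕ =>
        (1 / binEnt (ε ^ k / (ε ^ k + (1 - ε) ^ k))) *
          ((ε ^ k / (ε ^ k + (1 - ε) ^ k))
            + (1 + ε ^ k / (ε ^ k + (1 - ε) ^ k)) *
              binEnt ((ε ^ k / (ε ^ k + (1 - ε) ^ k))
                / (1 + ε ^ k / (ε ^ k + (1 - ε) ^ k)))))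
      Filter.atTop (nhds 1) := by
  have h1ε : (0:ℝ) < 1 - ε := by linarith
  have hA : Tendsto (fun k : ℕ => ε ^ k / (ε ^ k + (1 - ε) ^ k)) atTop (𝓝[>] (0:ℝ)) := by
    rw [tendsto_nhdsWithin_iff]
    constructor
    · have hrpow : Tendsto (fun k : ℕ => (ε / (1 - ε)) ^ k) atTop (𝓝 0) :=
        tendsto_pow_atTop_nhds_zero_of_lt_one (by positivity)
          ((div_lt_one h1ε).mpr (by linarith))
      have hden : Tendsto (fun k : ℕ => (ε / (1 - ε)) ^ k + 1) atTop (𝓝 ((0:ℝ) + 1)) :=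
        hrpow.add tendsto_const_nhds
      have h := hrpow.div hden (by norm_num)
      have heq : ∀ k : ℕ, (ε / (1 - ε)) ^ k / ((ε / (1 - ε)) ^ k + 1)
          = ε ^ k / (ε ^ k + (1 - ε) ^ k) := by
        intro k
        have hεk : (0:ℝ) < (1 - ε) ^ k := pow_pos h1ε k
        rw [div_pow]
        field_simp
      simpa [heq] using h.congr heq
    · exact Eventually.of_forall fun k =>
        div_pos (pow_pos hε0 k) (add_pos (pow_pos hε0 k) (pow_pos h1ε k))
  exact ratio_limit.comp hA
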